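/- Every eigenvalue of the symmetric matrix X_n·X_nᵀ (n ≥ 2) lies in {0, n}: the eigenvalue n occurs with multiplicity n−1 and the eigenvalue 0 with multiplicity (n−1)(n−2)/2. -/

import Mathlib

open Matrix Polynomial

/-- Index type for the rows of `X n`: pairs `(i,j)` with `i < j` in `Fin n`. -/
abbrev PairIdx (n : ℕ) := {p : Fin n × Fin n // p.1 < p.2}

/-- The matrix `X n` over `ℝ` whose row indexed by `(i,j)` (with `i < j`) is `e i - e j`. -/
def XmatR (n : ℕ) : Matrix (PairIdx n) (Fin n) ℝ :=
  Matrix.of fun p k => (if k = p.1.1 then 1 else 0) - (if k = p.1.2 then 1 else 0)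

open Finset


lemma stmt13_charpoly_diagonal {m : Type*} [Fintype m] [DecidableEq m] (d : m → ℝ) :
    (Matrix.diagonal d).charpoly = ∏ i, (X - C (d i)) := by
  have h : charmatrix (Matrix.diagonal d) = Matrix.diagonal (fun i => X - C (d i)) := by
    ext i j
    by_cases h : i = j
    · subst h; simp
    · simp [charmatrix_apply_ne _ _ _ h, Matrix.diagonal_apply_ne _ h,
        Matrix.diagonal_apply_ne d h]
  rw [Matrix.charpoly, h, Matrix.det_diagonal]

lemma stmt13_charpoly_conj {m : Type*} [Fintype m] [DecidableEq m]
    (U D : Matrix m m ℝ) (h1 : U * star U = 1) (h2 : star U * U = 1) :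
    (U * D * star U).charpoly = D.charpoly := by
  have hcm : charmatrix (U * D * star U)
      = (U.map C) * charmatrix D * ((star U).map C) := by
    unfold charmatrix
    have hs : Matrix.scalar m (X : ℝ[X])
        = (U.map C) * Matrix.scalar m (X : ℝ[X]) * ((star U).map C) := by
      rw [Matrix.scalar_apply, ← Matrix.smul_one_eq_diagonal, Matrix.mul_smul, Matrix.mul_one,
        Matrix.smul_mul, ← Matrix.map_mul, h1, Matrix.map_one C (map_zero C) (map_one C)]
    rw [mul_sub, sub_mul]
    conv_lhs => rw [hs]
    congr 1
    simp only [RingHom.mapMatrix_apply]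
    rw [Matrix.map_mul, Matrix.map_mul]
  rw [Matrix.charpoly, Matrix.charpoly, hcm, Matrix.det_mul, Matrix.det_mul]
  have hone : U.map (C : ℝ →+* ℝ[X]) * (star U).map C = 1 := by
    rw [← Matrix.map_mul, h1, Matrix.map_one C (map_zero C) (map_one C)]
  have hdet : det ((U.map (C : ℝ →+* ℝ[X]))) * det ((star U).map C) = 1 := by
    rw [← Matrix.det_mul, hone, Matrix.det_one]
  rw [mul_comm (det (U.map C)), mul_assoc, hdet, mul_one]


lemma stmt13_sum_split {n : ℕ} {M : Type*} [AddCommMonoid M] (f : Fin n × Fin n → M)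
    (hsymm : ∀ q : Fin n × Fin n, f q.swap = f q) :
    ∑ q : Fin n × Fin n, f q
      = 2 • (∑ p : PairIdx n, f p.1) + ∑ i : Fin n, f (i, i) := by
  classical
  have hsub : ∑ p : PairIdx n, f p.1
      = ∑ q ∈ univ.filter (fun q : Fin n × Fin n => q.1 < q.2), f q := by
    rw [Finset.sum_subtype (p := fun q : Fin n × Fin n => q.1 < q.2)
      (univ.filter (fun q : Fin n × Fin n => q.1 < q.2)) (by intro x; simp) f]
  have h1 : ∑ q : Fin n × Fin n, f q
      = ∑ q ∈ univ.filter (fun q : Fin n × Fin n => q.1 < q.2), f q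
        + ∑ q ∈ univ.filter (fun q : Fin n × Fin n => ¬ q.1 < q.2), f q :=
    (Finset.sum_filter_add_sum_filter_not univ _ f).symm
  have h2 : ∑ q ∈ univ.filter (fun q : Fin n × Fin n => ¬ q.1 < q.2), f q
      = ∑ q ∈ (univ.filter (fun q : Fin n × Fin n => ¬ q.1 < q.2)).filter
          (fun q => q.2 < q.1), f q
        + ∑ q ∈ (univ.filter (fun q : Fin n × Fin n => ¬ q.1 < q.2)).filter
          (fun q => ¬ q.2 < q.1), f q :=
    (Finset.sum_filter_add_sum_filter_not _ _ f).symm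
  have hset1 : (univ.filter (fun q : Fin n × Fin n => ¬ q.1 < q.2)).filter
      (fun q => q.2 < q.1) = univ.filter (fun q : Fin n × Fin n => q.2 < q.1) := by
    ext q
    simp only [Finset.mem_filter, Finset.mem_univ, true_and]
    exact ⟨fun h => h.2, fun h => ⟨asymm h, h⟩⟩
  have hswap : ∑ q ∈ univ.filter (fun q : Fin n × Fin n => q.2 < q.1), f q
      = ∑ q ∈ univ.filter (fun q : Fin n × Fin n => q.1 < q.2), f q := by
    apply Finset.sum_nbij' (i := Prod.swap) (j := Prod.swap)
    · intro a ha; simp only [Finset.mem_filter, Finset.mem_univ, true_and] at ha ⊢; exact ha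
    · intro a ha; simp only [Finset.mem_filter, Finset.mem_univ, true_and] at ha ⊢; exact ha
    · intro a _; exact Prod.swap_swap a
    · intro a _; exact Prod.swap_swap a
    · intro a _; exact (hsymm a).symm
  have hdiagset : ∑ q ∈ (univ.filter (fun q : Fin n × Fin n => ¬ q.1 < q.2)).filter
      (fun q => ¬ q.2 < q.1), f q = ∑ i : Fin n, f (i, i) := by
    apply Finset.sum_nbij' (i := fun q => q.1) (j := fun i => (i, i))
    · intro a _; exact Finset.mem_univ _
    · intro a _; simp
    · intro a ha
      simp only [Finset.mem_filter, Finset.mem_univ, true_and] at ha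
      have : a.1 = a.2 := le_antisymm (not_lt.mp ha.2) (not_lt.mp ha.1)
      exact Prod.ext rfl this
    · intro a _; rfl
    · intro a ha
      simp only [Finset.mem_filter, Finset.mem_univ, true_and] at ha
      have : a.1 = a.2 := le_antisymm (not_lt.mp ha.2) (not_lt.mp ha.1)
      congr 1
      exact Prod.ext rfl this.symm
  rw [h1, h2, hset1, hswap, hdiagset, hsub, two_nsmul]
  abel

lemma stmt13_two_mul_card_pairIdx (n : ℕ) : 2 * Fintype.card (PairIdx n) + n = n * n := by
  have h := stmt13_sum_split (n := n) (M := ℕ) (fun _ => 1) (fun _ => rfl)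
  simp only [Finset.sum_const, Finset.card_univ, smul_eq_mul, mul_one] at h
  have hc : Fintype.card (Fin n × Fin n) = n * n := by simp
  rw [hc, Fintype.card_fin] at h
  omega


lemma row_sum {n : ℕ} (p : PairIdx n) : ∑ k, XmatR n p k = 0 := by
  simp [XmatR, Finset.sum_sub_distrib]

lemma diag_entry {n : ℕ} (p : PairIdx n) : ∑ k, XmatR n p k * XmatR n p k = 2 := by
  have hne : p.1.1 ≠ p.1.2 := ne_of_lt p.2
  simp only [XmatR, Matrix.of_apply, sub_mul, mul_sub, Finset.sum_sub_distrib,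
    ite_mul, one_mul, zero_mul, mul_ite, mul_one, mul_zero]
  simp [Finset.sum_ite_eq, hne, hne.symm]
  norm_num


lemma transpose_mul_self (n : ℕ) : (XmatR n)ᵀ * XmatR n
    = (n : ℝ) • (1 : Matrix (Fin n) (Fin n) ℝ) - Matrix.of (fun _ _ => 1) := by
  ext a b
  set f : Fin n × Fin n → ℝ := fun q =>
      ((if a = q.1 then (1:ℝ) else 0) - (if a = q.2 then 1 else 0)) *
      ((if b = q.1 then (1:ℝ) else 0) - (if b = q.2 then 1 else 0)) with hf
  have hsymm : ∀ q : Fin n × Fin n, f q.swap = f q := by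
    intro q; simp only [hf, Prod.fst_swap, Prod.snd_swap]; ring
  have h := stmt13_sum_split f hsymm
  have hdiag : ∑ i : Fin n, f (i, i) = 0 := by
    apply Finset.sum_eq_zero; intro i _; simp [hf]
  have hLHS : ((XmatR n)ᵀ * XmatR n) a b = ∑ p : PairIdx n, f p.1 := by
    rw [Matrix.mul_apply]
    apply Finset.sum_congr rfl
    intro p _
    simp [XmatR, hf]
  have htot : ∑ q : Fin n × Fin n, f q = 2 * ((if a = b then (n:ℝ) else 0) - 1) := by
    rw [Fintype.sum_prod_type]
    simp only [hf, sub_mul, mul_sub, Finset.sum_sub_distrib, ite_mul, one_mul, zero_mul,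
      mul_ite, mul_one, mul_zero]
    simp [Finset.sum_ite_eq, Finset.sum_sub_distrib, Finset.mul_sum]
    split_ifs with hab
    · subst hab; simp; ring
    · simp [hab, Ne.symm hab]; ring
  rw [hdiag, add_zero, two_nsmul, ← two_mul] at h
  have : ∑ p : PairIdx n, f p.1 = (if a = b then (n:ℝ) else 0) - 1 := by
    rw [htot] at h; linarith
  rw [hLHS, this]
  by_cases hab : a = b <;>
    simp [hab, Matrix.one_apply, Matrix.smul_apply]

lemma colone_zero (n : ℕ) :
    (Matrix.of (fun _ _ => (1:ℝ)) : Matrix (Fin n) (Fin n) ℝ) * (XmatR n)ᵀ = 0 := by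
  ext a p
  simp only [Matrix.mul_apply, Matrix.of_apply, Matrix.transpose_apply, one_mul,
    Matrix.zero_apply]
  exact row_sum p

lemma mul_self_eq (n : ℕ) :
    (XmatR n * (XmatR n)ᵀ) * (XmatR n * (XmatR n)ᵀ) = (n:ℝ) • (XmatR n * (XmatR n)ᵀ) := by
  calc (XmatR n * (XmatR n)ᵀ) * (XmatR n * (XmatR n)ᵀ)
      = XmatR n * (((XmatR n)ᵀ * XmatR n) * (XmatR n)ᵀ) := by
        rw [Matrix.mul_assoc, ← Matrix.mul_assoc (XmatR n)ᵀ, Matrix.mul_assoc]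
    _ = XmatR n * ((n:ℝ) • (XmatR n)ᵀ) := by
        rw [transpose_mul_self, Matrix.sub_mul, Matrix.smul_mul, Matrix.one_mul,
          colone_zero, sub_zero]
    _ = (n:ℝ) • (XmatR n * (XmatR n)ᵀ) := by
        rw [Matrix.mul_smul]

lemma trace_eq (n : ℕ) :
    (XmatR n * (XmatR n)ᵀ).trace = 2 * Fintype.card (PairIdx n) := by
  rw [Matrix.trace]
  have : ∀ p : PairIdx n, (XmatR n * (XmatR n)ᵀ).diag p = 2 := by
    intro p
    simp only [Matrix.diag_apply, Matrix.mul_apply, Matrix.transpose_apply]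
    exact diag_entry p
  rw [Finset.sum_congr rfl (fun p _ => this p)]
  simp [mul_comm]




set_option maxHeartbeats 2000000 in
/-- For `n ≥ 2`, every eigenvalue of the symmetric matrix `X_n·X_nᵀ` lies in `{0, n}`,
with `n` of multiplicity `n−1` and `0` of multiplicity `(n−1)(n−2)/2`: the
characteristic polynomial is `(X − n)^(n−1) · X^((n−1)(n−2)/2)`, and every eigenvalue
of the associated endomorphism is `0` or `n`. -/
theorem stmt13 (n : ℕ) (hn : 2 ≤ n) :
    (XmatR n * (XmatR n)ᵀ).charpoly
        = (X - C (n : ℝ)) ^ (n - 1) * X ^ ((n - 1) * (n - 2) / 2) ∧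
    ∀ μ : ℝ, Module.End.HasEigenvalue
        (Matrix.mulVecLin (XmatR n * (XmatR n)ᵀ)) μ → μ = 0 ∨ μ = (n : ℝ) := by
  classical
  have hn0 : (n : ℝ) ≠ 0 := by positivity
  set A := XmatR n * (XmatR n)ᵀ with hA
  have hH : A.IsHermitian := by
    rw [hA, ← Matrix.conjTranspose_eq_transpose_of_trivial]
    exact Matrix.isHermitian_mul_conjTranspose_self _
  have hAA : A * A = (n:ℝ) • A := mul_self_eq n
  -- quadratic relation for eigen-type equations
  have quad : ∀ (μ : ℝ), μ ^ 2 = (n:ℝ) * μ → μ = 0 ∨ μ = (n:ℝ) := by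
    intro μ h
    have : μ * (μ - n) = 0 := by ring_nf; linarith [h]
    rcases mul_eq_zero.mp this with h' | h'
    · exact Or.inl h'
    · exact Or.inr (by linarith)
  -- second conjunct
  have part2 : ∀ μ : ℝ, Module.End.HasEigenvalue (Matrix.mulVecLin A) μ
      → μ = 0 ∨ μ = (n : ℝ) := by
    intro μ hμ
    obtain ⟨v, hv⟩ := hμ.exists_hasEigenvector
    have hv0 : v ≠ 0 := hv.2
    have happ : A *ᵥ v = μ • v := hv.apply_eq_smul
    have h2 : (μ ^ 2) • v = ((n:ℝ) * μ) • v := by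
      have : A *ᵥ (A *ᵥ v) = (A * A) *ᵥ v := by rw [Matrix.mulVec_mulVec]
      rw [happ, Matrix.mulVec_smul, happ, smul_smul, hAA, Matrix.smul_mulVec, happ,
        smul_smul] at this
      rw [pow_two]
      exact this
    apply quad
    have := sub_eq_zero.mpr h2
    rw [← sub_smul] at this
    rcases smul_eq_zero.mp this with h' | h'
    · linarith [sub_eq_zero.mp (by linarith [h'] : μ^2 - (n:ℝ)*μ = 0)]
    · exact absurd h' hv0
  refine ⟨?_, part2⟩
  -- eigenvalues are 0 or n
  have heig : ∀ p : PairIdx n, hH.eigenvalues p = 0 ∨ hH.eigenvalues p = (n:ℝ) := by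
    intro p
    have hv := hH.mulVec_eigenvectorBasis p
    have hv0 : ⇑(hH.eigenvectorBasis p) ≠ 0 := by
      intro h
      have h0 : hH.eigenvectorBasis p = 0 := by
        ext x
        exact congrFun h x
      exact hH.eigenvectorBasis.orthonormal.ne_zero p h0
    apply quad
    have h2 : A *ᵥ (A *ᵥ ⇑(hH.eigenvectorBasis p)) = (A * A) *ᵥ ⇑(hH.eigenvectorBasis p) := by
      rw [Matrix.mulVec_mulVec]
    rw [hv, Matrix.mulVec_smul, hv, smul_smul, hAA, Matrix.smul_mulVec, hv,
      smul_smul] at h2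
    have := sub_eq_zero.mpr h2
    rw [← sub_smul] at this
    rcases smul_eq_zero.mp this with h' | h'
    · nlinarith [h']
    · exact absurd h' hv0
  -- charpoly via spectral theorem
  have hU1 : (hH.eigenvectorUnitary : Matrix (PairIdx n) (PairIdx n) ℝ)
      * star (hH.eigenvectorUnitary : Matrix (PairIdx n) (PairIdx n) ℝ) = 1 := by
    exact Matrix.mem_unitaryGroup_iff.mp hH.eigenvectorUnitary.2
  have hU2 : star (hH.eigenvectorUnitary : Matrix (PairIdx n) (PairIdx n) ℝ)
      * (hH.eigenvectorUnitary : Matrix (PairIdx n) (PairIdx n) ℝ) = 1 := by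
    exact Matrix.mem_unitaryGroup_iff'.mp hH.eigenvectorUnitary.2
  have hofReal : (RCLike.ofReal ∘ hH.eigenvalues : PairIdx n → ℝ) = hH.eigenvalues := by
    funext p; simp
  have hchar : A.charpoly = ∏ p : PairIdx n, (X - C (hH.eigenvalues p)) := by
    conv_lhs => rw [hH.spectral_theorem, Unitary.conjStarAlgAut_apply]
    rw [stmt13_charpoly_conj _ _ hU1 hU2, hofReal, stmt13_charpoly_diagonal]
  -- trace
  have htrace : ∑ p : PairIdx n, hH.eigenvalues p = A.trace := by
    conv_rhs => rw [hH.spectral_theorem, Unitary.conjStarAlgAut_apply]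
    rw [Matrix.trace_mul_cycle, hU2, Matrix.one_mul, hofReal, Matrix.trace_diagonal]
  set S := Finset.univ.filter (fun p : PairIdx n => hH.eigenvalues p ≠ 0) with hS
  have hSval : ∀ p ∈ S, hH.eigenvalues p = (n:ℝ) := by
    intro p hp
    rcases heig p with h | h
    · exact absurd h (by simpa [hS] using hp)
    · exact h
  have hsum : ∑ p : PairIdx n, hH.eigenvalues p = S.card * n := by
    rw [← Finset.sum_filter_add_sum_filter_not Finset.univ
      (fun p : PairIdx n => hH.eigenvalues p ≠ 0)]
    rw [Finset.sum_congr rfl hSval, Finset.sum_const,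
      Finset.sum_eq_zero (fun p hp => by simpa using (Finset.mem_filter.mp hp).2), add_zero,
      nsmul_eq_mul]
  have hκ := stmt13_two_mul_card_pairIdx n
  have hScard : S.card = n - 1 := by
    have h1 : (S.card : ℝ) * n = 2 * Fintype.card (PairIdx n) := by
      rw [← hsum, htrace, trace_eq]
    have h2 : 2 * ((Fintype.card (PairIdx n) : ℝ)) = (n:ℝ) * n - n := by
      have hc : ((2 * Fintype.card (PairIdx n) + n : ℕ) : ℝ) = ((n * n : ℕ) : ℝ) := by
        exact_mod_cast congrArg (fun k : ℕ => (k : ℝ)) hκ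
      push_cast at hc
      linarith
    have h3 : (S.card : ℝ) * n = ((n:ℝ) - 1) * n := by
      rw [h1]; push_cast; rw [h2]; ring
    have h4 : (S.card : ℝ) = (n:ℝ) - 1 := mul_right_cancel₀ hn0 h3
    have : (S.card : ℝ) = ((n - 1 : ℕ) : ℝ) := by
      rw [h4, Nat.cast_sub (by omega)]; norm_num
    exact_mod_cast this
  have hcard : S.card ≤ Fintype.card (PairIdx n) := by
    simpa using Finset.card_filter_le Finset.univ _
  have hprod : ∏ p : PairIdx n, (X - C (hH.eigenvalues p))
      = (X - C (n:ℝ)) ^ S.card * X ^ (Fintype.card (PairIdx n) - S.card) := by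
    rw [← Finset.prod_filter_mul_prod_filter_not Finset.univ
      (fun p : PairIdx n => hH.eigenvalues p ≠ 0)]
    congr 1
    · rw [Finset.prod_congr rfl (fun p hp => by rw [hSval p hp]), Finset.prod_const]
    · have hzero : ∀ p ∈ Finset.univ.filter (fun p : PairIdx n => ¬ hH.eigenvalues p ≠ 0),
          X - C (hH.eigenvalues p) = (X : ℝ[X]) := by
        intro p hp
        simp [show hH.eigenvalues p = 0 from by simpa using (Finset.mem_filter.mp hp).2]
      rw [Finset.prod_congr rfl hzero, Finset.prod_const]
      congr 1
      have := Finset.card_filter_add_card_filter_not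
        (s := (Finset.univ : Finset (PairIdx n)))
        (p := fun p : PairIdx n => hH.eigenvalues p ≠ 0)
      simp only [Finset.card_univ] at this
      rw [← hS] at this
      omega
  have hexp : Fintype.card (PairIdx n) - S.card = (n - 1) * (n - 2) / 2 := by
    rw [hScard]
    obtain ⟨a, rfl⟩ : ∃ a, n = a + 2 := ⟨n - 2, by omega⟩
    have hg : (a + 2 - 1) * (a + 2 - 2) = a * a + a := by
      simp; ring
    rw [hg]
    have hκ' : 2 * Fintype.card (PairIdx (a + 2)) + (a + 2) = a * a + 4 * a + 4 := by
      rw [hκ]  -- hκ : 2 * κ + n = n * n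
      ring
    generalize a * a = b at hκ' ⊢
    omega
  rw [hchar, hprod, hexp, hScard]
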